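/- Let p ∈ (0,1/2], γ ∈ (0,1], and let (Δ_k), (δ_k) be non-negative real sequences. Let α_k ∈ [0, 1/γ) and π_k > 0 satisfy π_k(1 - γ α_k) = π_{k-1} with π₀ > 0, and assume π_k Δ_k ≤ δ_k + p γ Σ_{i=1}^k α_i π_i Δ_i for all k ≥ 1. Then Σ_{i=1}^k α_i π_i Δ_i ≤ Σ_{i=1}^k α_i δ_i (π_k/π_{i-1})^p for all k ≥ 1. -/

import Mathlib

open Real

theorem weighted_sequence_lemma_quasar (p γ : ℝ)
    (hp0 : 0 < p) (hp2 : p ≤ 1 / 2) (hγ : γ ∈ Set.Ioc (0 : ℝ) 1)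
    (Δ δ α w : ℕ → ℝ)
    (hΔ : ∀ k, 0 ≤ Δ k) (hδ : ∀ k, 0 ≤ δ k)
    (hα : ∀ k, 1 ≤ k → 0 ≤ α k ∧ α k < 1 / γ)
    (hwpos : ∀ k, 0 < w k)
    (hrec : ∀ k, 1 ≤ k → w k * (1 - γ * α k) = w (k - 1))
    (hmain : ∀ k, 1 ≤ k →
      w k * Δ k ≤ δ k + p * γ * ∑ i ∈ Finset.Icc 1 k, α i * w i * Δ i) :
    ∀ k, 1 ≤ k →
      ∑ i ∈ Finset.Icc 1 k, α i * w i * Δ i ≤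
        ∑ i ∈ Finset.Icc 1 k, α i * δ i * (w k / w (i - 1)) ^ p := by
  have hγ0 : 0 < γ := hγ.1
  have key : ∀ k : ℕ,
      ∑ i ∈ Finset.Icc 1 k, α i * w i * Δ i ≤
        ∑ i ∈ Finset.Icc 1 k, α i * δ i * (w k / w (i - 1)) ^ p := by
    intro k
    induction k with
    | zero => simp
    | succ n ih =>
      set τ := ∑ i ∈ Finset.Icc 1 (n + 1), α i * w i * Δ i with hτ
      have hn1 : 1 ≤ n + 1 := Nat.le_add_left 1 n
      have hαn := hα (n + 1) hn1
      have hγα0 : 0 ≤ γ * α (n + 1) := mul_nonneg hγ0.le hαn.1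
      have hγα1 : γ * α (n + 1) < 1 := by
        have := (mul_lt_mul_iff_right₀ hγ0).2 hαn.2
        rwa [mul_one_div, div_self hγ0.ne'] at this
      have hpos1 : 0 < 1 - γ * α (n + 1) := by linarith
      -- τ ≥ 0
      have hτ0 : 0 ≤ τ := Finset.sum_nonneg fun i hi => by
        have hi1 : 1 ≤ i := (Finset.mem_Icc.1 hi).1
        exact mul_nonneg (mul_nonneg (hα i hi1).1 (hwpos i).le) (hΔ i)
      -- split of τ
      have hsplit : τ = (∑ i ∈ Finset.Icc 1 n, α i * w i * Δ i)
          + α (n + 1) * w (n + 1) * Δ (n + 1) := by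
        rw [hτ, Finset.sum_Icc_succ_top hn1]
      -- (1 - pγα) τ ≤ τ_n + α δ
      have hstep : (1 - p * (γ * α (n + 1))) * τ ≤
          (∑ i ∈ Finset.Icc 1 n, α i * w i * Δ i) + α (n + 1) * δ (n + 1) := by
        have h1 := hmain (n + 1) hn1
        have h2 : α (n + 1) * (w (n + 1) * Δ (n + 1)) ≤
            α (n + 1) * (δ (n + 1) + p * γ * τ) :=
          mul_le_mul_of_nonneg_left h1 hαn.1
        nlinarith [hsplit]
      -- Bernoulli: (1 - γα)^p ≤ 1 - p γα
      have hbern : (1 - γ * α (n + 1)) ^ p ≤ 1 - p * (γ * α (n + 1)) := by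
        have := rpow_one_add_le_one_add_mul_self (s := -(γ * α (n + 1)))
          (by linarith) hp0.le (by linarith)
        rw [← sub_eq_add_neg] at this
        calc (1 - γ * α (n + 1)) ^ p = (1 + -(γ * α (n + 1))) ^ p := by
              rw [← sub_eq_add_neg]
          _ ≤ 1 + p * -(γ * α (n + 1)) := this
          _ = 1 - p * (γ * α (n + 1)) := by ring
      -- 1 - γα = w n / w (n+1)
      have hrecn : w (n + 1) * (1 - γ * α (n + 1)) = w n := by
        simpa using hrec (n + 1) hn1
      have hw : 1 - γ * α (n + 1) = w n / w (n + 1) := by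
        rw [eq_div_iff (hwpos (n + 1)).ne']
        linear_combination hrecn
      have hstep2 : (w n / w (n + 1)) ^ p * τ ≤
          (∑ i ∈ Finset.Icc 1 n, α i * w i * Δ i) + α (n + 1) * δ (n + 1) := by
        rw [← hw]
        exact le_trans (mul_le_mul_of_nonneg_right hbern hτ0) hstep
      -- multiply by c = (w(n+1)/w n)^p
      have hc0 : (0 : ℝ) < (w (n + 1) / w n) ^ p :=
        rpow_pos_of_pos (div_pos (hwpos _) (hwpos _)) p
      have hinv : (w (n + 1) / w n) ^ p * (w n / w (n + 1)) ^ p = 1 := by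
        rw [← mul_rpow (div_pos (hwpos _) (hwpos _)).le (div_pos (hwpos _) (hwpos _)).le]
        rw [div_mul_div_comm, mul_comm (w (n+1)) (w n), div_self
          (mul_pos (hwpos _) (hwpos _)).ne', one_rpow]
      have hmul : τ ≤ (w (n + 1) / w n) ^ p *
          ((∑ i ∈ Finset.Icc 1 n, α i * w i * Δ i) + α (n + 1) * δ (n + 1)) := by
        have := mul_le_mul_of_nonneg_left hstep2 hc0.le
        rwa [← mul_assoc, hinv, one_mul] at this
      -- combine with ih
      have hsum : (w (n + 1) / w n) ^ p *
          (∑ i ∈ Finset.Icc 1 n, α i * δ i * (w n / w (i - 1)) ^ p)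
          = ∑ i ∈ Finset.Icc 1 n, α i * δ i * (w (n + 1) / w (i - 1)) ^ p := by
        rw [Finset.mul_sum]
        refine Finset.sum_congr rfl fun i hi => ?_
        have h1 : (w (n + 1) / w n) ^ p * (w n / w (i - 1)) ^ p
            = (w (n + 1) / w (i - 1)) ^ p := by
          rw [← mul_rpow (div_pos (hwpos _) (hwpos _)).le (div_pos (hwpos _) (hwpos _)).le]
          congr 1
          rw [div_mul_div_comm, mul_comm (w (n + 1)) (w n),
            mul_div_mul_left _ _ (hwpos n).ne']
        rw [← h1]
        ring
      calc τ ≤ (w (n + 1) / w n) ^ p *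
            ((∑ i ∈ Finset.Icc 1 n, α i * w i * Δ i) + α (n + 1) * δ (n + 1)) := hmul
        _ ≤ (w (n + 1) / w n) ^ p *
            ((∑ i ∈ Finset.Icc 1 n, α i * δ i * (w n / w (i - 1)) ^ p)
              + α (n + 1) * δ (n + 1)) := by
            apply mul_le_mul_of_nonneg_left _ hc0.le
            linarith [ih]
        _ = ∑ i ∈ Finset.Icc 1 (n + 1), α i * δ i * (w (n + 1) / w (i - 1)) ^ p := by
            rw [Finset.sum_Icc_succ_top hn1, mul_add, hsum, Nat.add_sub_cancel]
            ring
  exact fun k _ => key k
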